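/- Let A ∈ ℝ^{n×n} be invertible, b ∈ ℝ^n nonzero, and 1 ≤ r, s ≤ ∞. Consider the problem f(A,b) = A⁻¹b with componentwise input error RelError_Cw((Ã,b̃),(A,b)) = max{ ‖Ã − A‖_{rs}/‖A‖_{rs}, ‖b̃ − b‖_s/‖b‖_s } and normwise output error ‖Ã⁻¹b̃ − A⁻¹b‖_r/‖A⁻¹b‖_r. Then the mixed condition number M^f(A,b), defined as the limit as δ → 0⁺ of the supremum over invertible Ã and b̃ with 0 < RelError_Cw((Ã,b̃),(A,b)) ≤ δ of the ratio of output to input error, equals κ_{rs}(A) + ‖A⁻¹‖_{sr}‖b‖_s/‖A⁻¹b‖_r, where κ_{rs}(A) = ‖A‖_{rs}‖A⁻¹‖_{sr}. -/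

import Mathlib

open scoped ENNReal
open MeasureTheory ProbabilityTheory Filter Topology

/-- The ℓ^p norm on ℝ^n. -/
noncomputable def lpNorm {n : ℕ} (p : ℝ≥0∞) (x : Fin n → ℝ) : ℝ :=
  ‖(WithLp.toLp p x : PiLp p (fun _ : Fin n => ℝ))‖

/-- The operator norm ‖B‖_{rs} = sup_{x ≠ 0} ‖Bx‖_s / ‖x‖_r of a matrix
B : ℝ^{n×m}, where the domain ℝ^m carries the ℓ^r norm and the codomain ℝ^n
carries the ℓ^s norm. -/
noncomputable def opNorm {n m : ℕ} (r s : ℝ≥0∞) (B : Matrix (Fin n) (Fin m) ℝ) : ℝ :=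
  sSup {c : ℝ | ∃ x : Fin m → ℝ, x ≠ 0 ∧ c = lpNorm s (B.mulVec x) / lpNorm r x}

section Aux

variable {n m k : ℕ} (r s t : ℝ≥0∞) [Fact (1 ≤ r)] [Fact (1 ≤ s)] [Fact (1 ≤ t)]

/-- The matrix `B` as a continuous linear map from `ℓ^r` to `ℓ^s`. -/
noncomputable def clmOf (B : Matrix (Fin n) (Fin m) ℝ) :
    PiLp r (fun _ : Fin m => ℝ) →L[ℝ] PiLp s (fun _ : Fin n => ℝ) :=
  LinearMap.toContinuousLinearMap
    ((WithLp.linearEquiv s ℝ (Fin n → ℝ)).symm.toLinearMap ∘ₗ B.mulVecLin ∘ₗ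
      (WithLp.linearEquiv r ℝ (Fin m → ℝ)).toLinearMap)

lemma clmOf_apply (B : Matrix (Fin n) (Fin m) ℝ) (x : Fin m → ℝ) :
    clmOf r s B (WithLp.toLp r x) = WithLp.toLp s (B.mulVec x) := rfl

lemma clmOf_apply' (B : Matrix (Fin n) (Fin m) ℝ) (x : PiLp r (fun _ : Fin m => ℝ)) :
    clmOf r s B x = WithLp.toLp s (B.mulVec x.ofLp) := rfl

omit [Fact (1 ≤ r)] in
lemma lpNorm_eq (x : Fin n → ℝ) :
    lpNorm r x = ‖WithLp.toLp r x‖ := rfl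

lemma opNorm_eq [Nonempty (Fin m)] (B : Matrix (Fin n) (Fin m) ℝ) :
    opNorm r s B = ‖clmOf r s B‖ := by
  have hbdd : ∀ c ∈ {c : ℝ | ∃ x : Fin m → ℝ, x ≠ 0 ∧ c = lpNorm s (B.mulVec x) / lpNorm r x},
      c ≤ ‖clmOf r s B‖ := by
    rintro c ⟨x, hx, rfl⟩
    have hx' : (0:ℝ) < lpNorm r x := by
      simpa [lpNorm_eq] using
        norm_pos_iff.2 (show WithLp.toLp r x ≠ 0 from (WithLp.toLp_eq_zero r).not.2 hx)
    rw [div_le_iff₀ hx']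
    have h := (clmOf r s B).le_opNorm (WithLp.toLp r x)
    rw [clmOf_apply] at h
    exact h
  have hne : ∃ c, c ∈ {c : ℝ | ∃ x : Fin m → ℝ, x ≠ 0 ∧ c = lpNorm s (B.mulVec x) / lpNorm r x} := by
    refine ⟨_, Pi.single (Classical.arbitrary (Fin m)) 1, ?_, rfl⟩
    simp [Pi.single_eq_same, funext_iff]
    exact ⟨Classical.arbitrary (Fin m), by simp⟩
  refine le_antisymm (csSup_le (hne.imp fun c hc => hc) hbdd) ?_
  refine (clmOf r s B).opNorm_le_bound ?_ ?_
  · obtain ⟨c, hc⟩ := hne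
    have h0 : (0:ℝ) ≤ c := by
      obtain ⟨x, hx, rfl⟩ := hc
      simp only [lpNorm_eq]; positivity
    exact h0.trans (le_csSup ⟨_, hbdd⟩ hc)
  · intro x
    by_cases hx : x = 0
    · simp [hx]
    · have hx' : (0:ℝ) < ‖x‖ := norm_pos_iff.2 hx
      have := le_csSup ⟨_, hbdd⟩ (⟨x.ofLp, fun h => hx ((WithLp.ofLp_eq_zero r).1 h), rfl⟩ :
        (lpNorm s (B.mulVec x) / lpNorm r x) ∈
          {c : ℝ | ∃ x : Fin m → ℝ, x ≠ 0 ∧ c = lpNorm s (B.mulVec x) / lpNorm r x})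
      rw [div_le_iff₀ (by simpa [lpNorm_eq] using hx')] at this
      rw [clmOf_apply']
      exact this

lemma clmOf_sub (B C : Matrix (Fin n) (Fin m) ℝ) :
    clmOf r s (B - C) = clmOf r s B - clmOf r s C := by
  refine ContinuousLinearMap.ext fun x => ?_
  simp only [ContinuousLinearMap.sub_apply]
  show WithLp.toLp s ((B - C).mulVec x.ofLp) = WithLp.toLp s (B.mulVec x.ofLp) - WithLp.toLp s (C.mulVec x.ofLp)
  rw [Matrix.sub_mulVec, WithLp.toLp_sub]

lemma clmOf_add (B C : Matrix (Fin n) (Fin m) ℝ) :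
    clmOf r s (B + C) = clmOf r s B + clmOf r s C := by
  refine ContinuousLinearMap.ext fun x => ?_
  show WithLp.toLp s ((B + C).mulVec x.ofLp) = WithLp.toLp s (B.mulVec x.ofLp) + WithLp.toLp s (C.mulVec x.ofLp)
  rw [Matrix.add_mulVec, WithLp.toLp_add]

lemma clmOf_smul (c : ℝ) (B : Matrix (Fin n) (Fin m) ℝ) :
    clmOf r s (c • B) = c • clmOf r s B := by
  refine ContinuousLinearMap.ext fun x => ?_
  show WithLp.toLp s ((c • B).mulVec x.ofLp) = c • WithLp.toLp s (B.mulVec x.ofLp)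
  rw [Matrix.smul_mulVec, WithLp.toLp_smul]

lemma clmOf_mul (B : Matrix (Fin n) (Fin m) ℝ) (C : Matrix (Fin m) (Fin k) ℝ) :
    clmOf t s (B * C) = (clmOf r s B).comp (clmOf t r C) := by
  refine ContinuousLinearMap.ext fun x => ?_
  show WithLp.toLp s ((B * C).mulVec x.ofLp) = WithLp.toLp s (B.mulVec (C.mulVec x.ofLp))
  rw [Matrix.mulVec_mulVec]

/-- Norm attainment for continuous linear maps in finite dimension. -/
lemma exists_norm_apply_eq' {E F : Type*} [NormedAddCommGroup E] [NormedSpace ℝ E]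
    [NormedAddCommGroup F] [NormedSpace ℝ F] [FiniteDimensional ℝ E] [Nontrivial E]
    (f : E →L[ℝ] F) : ∃ w : E, ‖w‖ = 1 ∧ ‖f w‖ = ‖f‖ := by
  obtain ⟨w, hw, hmax⟩ := (isCompact_sphere (0:E) 1).exists_isMaxOn
    (NormedSpace.sphere_nonempty.2 zero_le_one)
    (continuous_norm.comp f.continuous).continuousOn
  simp only [mem_sphere_iff_norm, sub_zero] at hw
  refine ⟨w, hw, le_antisymm (by simpa [hw] using f.le_opNorm w) ?_⟩
  refine f.opNorm_le_bound (norm_nonneg _) fun x => ?_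
  by_cases hx : x = 0
  · simp [hx]
  · have hnx : (0:ℝ) < ‖x‖ := norm_pos_iff.2 hx
    have hmem : (‖x‖⁻¹ • x) ∈ Metric.sphere (0:E) 1 := by
      simp [norm_smul, abs_of_pos (inv_pos.2 hnx), inv_mul_cancel₀ hnx.ne']
    have := hmax hmem
    simp only [Set.mem_setOf_eq, Function.comp_apply, _root_.map_smul, norm_smul,
      norm_inv, norm_norm] at this
    calc ‖f x‖ = ‖x‖ * (‖x‖⁻¹ * ‖f x‖) := by field_simp
    _ ≤ ‖x‖ * ‖f w‖ := by
        apply mul_le_mul_of_nonneg_left _ hnx.le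
        simpa using this
    _ = ‖f w‖ * ‖x‖ := mul_comm _ _

/-- The rank one matrix `w gᵀ`. -/
noncomputable def rk1 (g : PiLp r (fun _ : Fin m => ℝ) →L[ℝ] ℝ) (w : Fin n → ℝ) :
    Matrix (Fin n) (Fin m) ℝ :=
  Matrix.of fun i j => w i * g (WithLp.toLp r (Pi.single j 1))

omit [Fact (1 ≤ r)] in
lemma rk1_mulVec (g : PiLp r (fun _ : Fin m => ℝ) →L[ℝ] ℝ) (w : Fin n → ℝ)
    (y : Fin m → ℝ) : (rk1 r g w).mulVec y = g (WithLp.toLp r y) • w := by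
  funext i
  have hy : g (WithLp.toLp r y) = ∑ j, y j * g (WithLp.toLp r (Pi.single j 1)) := by
    have hrep : y = ∑ j, y j • (Pi.single j 1 : Fin m → ℝ) := by
      funext k
      simp [Finset.sum_apply, Pi.single_apply]
    calc g (WithLp.toLp r y) = g (WithLp.toLp r (∑ j, y j • (Pi.single j 1 : Fin m → ℝ))) := by rw [← hrep]
    _ = ∑ j, y j * g (WithLp.toLp r (Pi.single j 1)) := by
        rw [WithLp.toLp_sum, map_sum]; simp [_root_.map_smul, smul_eq_mul]
  simp [rk1, Matrix.mulVec, dotProduct, hy, Finset.sum_mul, Pi.smul_apply, smul_eq_mul]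
  exact Finset.sum_congr rfl fun j _ => by ring

lemma continuous_lpNorm : Continuous fun y : Fin n → ℝ => lpNorm r y :=
  (continuous_norm (E := PiLp r (fun _ : Fin n => ℝ))).comp
    (PiLp.continuousLinearEquiv r ℝ (fun _ : Fin n => ℝ)).symm.continuous

end Aux

set_option maxHeartbeats 2000000 in
/-- Theorem 4.1: the mixed condition number of the problem f(A,b) = A⁻¹b, with
componentwise relative input error max{‖Ã − A‖_{rs}/‖A‖_{rs}, ‖b̃ − b‖_s/‖b‖_s}
and normwise relative output error ‖Ã⁻¹b̃ − A⁻¹b‖_r/‖A⁻¹b‖_r, equals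
κ_{rs}(A) + ‖A⁻¹‖_{sr}‖b‖_s/‖A⁻¹b‖_r where κ_{rs}(A) = ‖A‖_{rs}‖A⁻¹‖_{sr}. -/
theorem tendsto_mixed_cond_linear_system (n : ℕ) (r s : ℝ≥0∞) (hr : 1 ≤ r) (hs : 1 ≤ s)
    (A : Matrix (Fin n) (Fin n) ℝ) (hA : IsUnit A.det)
    (b : Fin n → ℝ) (hb : b ≠ 0) :
    Tendsto
      (fun δ : ℝ => sSup {c : ℝ | ∃ (B : Matrix (Fin n) (Fin n) ℝ) (b' : Fin n → ℝ),
        IsUnit B.det ∧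
        0 < max (opNorm r s (B - A) / opNorm r s A) (lpNorm s (b' - b) / lpNorm s b) ∧
        max (opNorm r s (B - A) / opNorm r s A) (lpNorm s (b' - b) / lpNorm s b) ≤ δ ∧
        c = (lpNorm r (B⁻¹.mulVec b' - A⁻¹.mulVec b) / lpNorm r (A⁻¹.mulVec b)) /
            max (opNorm r s (B - A) / opNorm r s A) (lpNorm s (b' - b) / lpNorm s b)})
      (𝓝[>] (0 : ℝ))
      (𝓝 (opNorm r s A * opNorm s r A⁻¹ +
            opNorm s r A⁻¹ * lpNorm s b / lpNorm r (A⁻¹.mulVec b))) := by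
  haveI : Fact (1 ≤ r) := ⟨hr⟩
  haveI : Fact (1 ≤ s) := ⟨hs⟩
  haveI : Nonempty (Fin n) := by
    rcases Nat.eq_zero_or_pos n with h | h
    · subst h; exact absurd (funext fun i => i.elim0) hb
    · exact ⟨⟨0, h⟩⟩
  classical
  set x : Fin n → ℝ := A⁻¹.mulVec b with hxdef
  have hAx : A.mulVec x = b := by
    rw [hxdef, Matrix.mulVec_mulVec, Matrix.mul_nonsing_inv _ hA, Matrix.one_mulVec]
  have hxne : x ≠ 0 := fun h => hb (by rw [← hAx, h, Matrix.mulVec_zero])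
  have hnx : 0 < lpNorm r x := by
    rw [lpNorm_eq]
    exact norm_pos_iff.2 ((WithLp.toLp_eq_zero r).not.2 hxne)
  have hnb : 0 < lpNorm s b := by
    rw [lpNorm_eq]
    exact norm_pos_iff.2 ((WithLp.toLp_eq_zero s).not.2 hb)
  set a := opNorm r s A with hadef
  set ia := opNorm s r A⁻¹ with hiadef
  set nb := lpNorm s b with hnbdef
  set nx := lpNorm r x with hnxdef
  have ha : 0 < a := by
    rw [hadef, opNorm_eq]
    refine norm_pos_iff.2 fun h0 => hb ?_
    have h1 : clmOf r s A (WithLp.toLp r x) = 0 := by rw [h0]; rfl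
    rw [clmOf_apply] at h1
    rw [← hAx]
    exact (WithLp.toLp_eq_zero s).1 h1
  have hia : 0 < ia := by
    rw [hiadef, opNorm_eq]
    refine norm_pos_iff.2 fun h0 => hxne ?_
    have h1 : clmOf s r A⁻¹ (WithLp.toLp s b) = 0 := by rw [h0]; rfl
    rw [clmOf_apply] at h1
    exact (WithLp.toLp_eq_zero r).1 h1
  -- dual functional and norming vector
  obtain ⟨g, hg1, hgx0⟩ :=
    exists_dual_vector ℝ (WithLp.toLp r x) (norm_ne_zero_iff.2 ((WithLp.toLp_eq_zero r).not.2 hxne))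
  have hgx : g (WithLp.toLp r x) = nx := by
    exact hgx0
  haveI : Nontrivial (PiLp s (fun _ : Fin n => ℝ)) :=
    ⟨⟨WithLp.toLp s b, 0, (WithLp.toLp_eq_zero s).not.2 hb⟩⟩
  obtain ⟨w, hw1, hwA⟩ := exists_norm_apply_eq' (clmOf s r A⁻¹)
  set w' : Fin n → ℝ := w.ofLp with hw'def
  set M : Matrix (Fin n) (Fin n) ℝ := rk1 r g w' with hMdef
  have hMmul : ∀ y : Fin n → ℝ, M.mulVec y = g (WithLp.toLp r y) • w' := fun y => rk1_mulVec r g w' y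
  have hM1 : ‖clmOf r s M‖ = 1 := by
    refine le_antisymm ?_ ?_
    · refine (clmOf r s M).opNorm_le_bound zero_le_one fun y => ?_
      have h1 : clmOf r s M y = g y • w := by
        rw [clmOf_apply', hMmul, WithLp.toLp_smul, WithLp.toLp_ofLp, WithLp.toLp_ofLp]
      rw [h1, norm_smul, hw1, mul_one, one_mul]
      calc ‖g y‖ ≤ ‖g‖ * ‖y‖ := g.le_opNorm y
      _ = ‖y‖ := by rw [hg1, one_mul]
    · have h1 : clmOf r s M (WithLp.toLp r x) = g (WithLp.toLp r x) • w := by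
        rw [clmOf_apply, hMmul, WithLp.toLp_smul, WithLp.toLp_ofLp]
      have h2 : ‖clmOf r s M (WithLp.toLp r x)‖ = nx := by
        rw [h1, norm_smul, hw1, mul_one, hgx, Real.norm_eq_abs, abs_of_pos hnx]
      have h3 := (clmOf r s M).le_opNorm (WithLp.toLp r x)
      rw [h2, ← lpNorm_eq, ← hnxdef] at h3
      nlinarith [h3, hnx]
  -- the perturbation family
  set B : ℝ → Matrix (Fin n) (Fin n) ℝ := fun δ => A - (δ * a) • M with hBdef
  have hB0 : B 0 = A := by simp [hBdef]
  have hBsubA : ∀ δ, B δ - A = (-(δ * a)) • M := by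
    intro δ
    simp only [hBdef, neg_smul, sub_sub_cancel_left]
  have hopE : ∀ δ : ℝ, opNorm r s (B δ - A) = |δ| * a := by
    intro δ
    rw [opNorm_eq, hBsubA, clmOf_smul, norm_smul (-(δ * a)) (clmOf r s M), hM1, mul_one,
      Real.norm_eq_abs, abs_neg, abs_mul, abs_of_pos ha]
  set bb : ℝ → (Fin n → ℝ) := fun δ => b + (δ * nb) • w' with hbbdef
  have hbbsub : ∀ δ : ℝ, lpNorm s (bb δ - b) = |δ| * nb := by
    intro δ
    have h1 : WithLp.toLp s (bb δ - b) = (δ * nb) • w := by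
      show WithLp.toLp s (b + (δ * nb) • w' - b) = (δ * nb) • w
      rw [add_sub_cancel_left, WithLp.toLp_smul, WithLp.toLp_ofLp]
    rw [lpNorm_eq, h1, norm_smul, hw1, mul_one, Real.norm_eq_abs, abs_mul, abs_of_pos hnb]
  have hgx' : g (WithLp.toLp r x) = nx := hgx
  -- continuity facts
  have hBcont : Continuous B := by
    apply continuous_const.sub
    exact (continuous_id.mul continuous_const).smul continuous_const
  have hdetne : ∀ᶠ δ in 𝓝 (0:ℝ), IsUnit ((B δ).det) := by
    have hc : ContinuousAt (fun δ => (B δ).det) 0 := hBcont.matrix_det.continuousAt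
    have hne0 : (fun δ => (B δ).det) 0 ≠ 0 := by
      simp only [hB0]
      exact isUnit_iff_ne_zero.1 hA
    filter_upwards [hc.eventually_ne hne0] with δ hδ using isUnit_iff_ne_zero.2 hδ
  have hInvCont : ContinuousAt (fun δ => (B δ)⁻¹) 0 := by
    have h1 : ContinuousAt Inv.inv (B 0) := by
      rw [hB0]
      exact continuousAt_matrix_inv A (NormedRing.inverse_continuousAt hA.unit)
    exact h1.comp hBcont.continuousAt
  set κ := a * ia with hκdef
  have hκ : 0 < κ := mul_pos ha hia
  set lo : ℝ → ℝ := fun δ => ((nb + a * nx) / nx) * lpNorm r ((B δ)⁻¹.mulVec w') with hlodef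
  set up : ℝ → ℝ := fun δ => (ia / (1 - δ * κ)) * ((nb + a * nx) / nx) with hupdef
  have hlpA : lpNorm r (A⁻¹.mulVec w') = ia := by
    rw [hiadef, opNorm_eq, ← hwA]
    rfl
  have hT : ((nb + a * nx) / nx) * ia = a * ia + ia * nb / nx := by
    field_simp
    ring
  have hlo_tendsto : Tendsto lo (𝓝[>] (0:ℝ)) (𝓝 (a * ia + ia * nb / nx)) := by
    have hc : ContinuousAt lo 0 := by
      apply ContinuousAt.mul continuousAt_const
      exact ((continuous_lpNorm r).comp
        (continuous_id.matrix_mulVec continuous_const)).continuousAt.comp hInvCont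
    have h0 : lo 0 = a * ia + ia * nb / nx := by
      show ((nb + a * nx) / nx) * lpNorm r ((B 0)⁻¹.mulVec w') = _
      rw [hB0, hlpA, hT]
    have h1 := hc.continuousWithinAt (s := Set.Ioi (0:ℝ))
    exact h0 ▸ h1
  have hup_tendsto : Tendsto up (𝓝[>] (0:ℝ)) (𝓝 (a * ia + ia * nb / nx)) := by
    have hc : ContinuousAt up 0 := by
      apply ContinuousAt.mul _ continuousAt_const
      apply ContinuousAt.div continuousAt_const
      · exact (continuous_const.sub (continuous_id.mul continuous_const)).continuousAt
      · norm_num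
    have h0 : up 0 = a * ia + ia * nb / nx := by
      show (ia / (1 - 0 * κ)) * ((nb + a * nx) / nx) = _
      rw [zero_mul, sub_zero, div_one, mul_comm, hT]
    have h1 := hc.continuousWithinAt (s := Set.Ioi (0:ℝ))
    exact h0 ▸ h1
  have hev : ∀ᶠ δ in 𝓝[>] (0:ℝ), 0 < δ ∧ δ * κ < 1/2 ∧ IsUnit ((B δ).det) := by
    have h1 : Set.Ioo (0:ℝ) ((2*κ)⁻¹) ∈ 𝓝[>] (0:ℝ) :=
      Ioo_mem_nhdsGT_of_mem ⟨le_refl 0, by positivity⟩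
    filter_upwards [h1, hdetne.filter_mono nhdsWithin_le_nhds] with δ hδ hdet
    refine ⟨hδ.1, ?_, hdet⟩
    have h2 := mul_lt_mul_of_pos_right hδ.2 hκ
    have h3 : (2*κ)⁻¹ * κ = 1/2 := by
      field_simp
    linarith
  -- the matrix identity for upper bound
  have hCinv : ∀ (C : Matrix (Fin n) (Fin n) ℝ), IsUnit C.det →
      C⁻¹ = A⁻¹ + C⁻¹ * ((A - C) * A⁻¹) := by
    intro C hCu
    have h1 : (A - C) * A⁻¹ = 1 - C * A⁻¹ := by
      rw [Matrix.sub_mul, Matrix.mul_nonsing_inv _ hA]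
    rw [h1, Matrix.mul_sub, Matrix.mul_one, ← Matrix.mul_assoc,
      Matrix.nonsing_inv_mul _ hCu, Matrix.one_mul]
    abel
  -- key membership for lower bound
  have hmem : ∀ δ : ℝ, 0 < δ → IsUnit ((B δ).det) →
      lo δ ∈ {c : ℝ | ∃ (C : Matrix (Fin n) (Fin n) ℝ) (b' : Fin n → ℝ),
        IsUnit C.det ∧
        0 < max (opNorm r s (C - A) / a) (lpNorm s (b' - b) / nb) ∧
        max (opNorm r s (C - A) / a) (lpNorm s (b' - b) / nb) ≤ δ ∧
        c = (lpNorm r (C⁻¹.mulVec b' - x) / nx) /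
            max (opNorm r s (C - A) / a) (lpNorm s (b' - b) / nb)} := by
    intro δ hδ0 hδu
    have hmax : max (opNorm r s (B δ - A) / a) (lpNorm s (bb δ - b) / nb) = δ := by
      rw [hopE, hbbsub, abs_of_pos hδ0, mul_div_assoc, div_self ha.ne', mul_one,
        mul_div_assoc, div_self hnb.ne', mul_one, max_self]
    have hMx : M.mulVec x = nx • w' := by rw [hMmul x, hgx']
    have hBx : (B δ).mulVec x = b - (δ * (a * nx)) • w' := by
      show (A - (δ * a) • M).mulVec x = _
      rw [Matrix.sub_mulVec, hAx, Matrix.smul_mulVec, hMx, smul_smul, mul_assoc]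
    have hbbeq : bb δ = (B δ).mulVec x + (δ * (nb + a * nx)) • w' := by
      rw [hBx]
      show b + (δ * nb) • w' = _
      module
    have hinv : (B δ)⁻¹.mulVec (bb δ) = x + (δ * (nb + a * nx)) • ((B δ)⁻¹.mulVec w') := by
      rw [hbbeq, Matrix.mulVec_add, Matrix.mulVec_smul, Matrix.mulVec_mulVec,
        Matrix.nonsing_inv_mul _ hδu, Matrix.one_mulVec]
    have hkey : (B δ)⁻¹.mulVec (bb δ) - x = (δ * (nb + a * nx)) • ((B δ)⁻¹.mulVec w') := by
      rw [hinv, add_sub_cancel_left]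
    have hnum : lpNorm r ((B δ)⁻¹.mulVec (bb δ) - x)
        = (δ * (nb + a * nx)) * lpNorm r ((B δ)⁻¹.mulVec w') := by
      rw [hkey, lpNorm_eq, lpNorm_eq]
      have h1 : WithLp.toLp r ((δ * (nb + a * nx)) • ((B δ)⁻¹.mulVec w'))
          = (δ * (nb + a * nx)) • WithLp.toLp r ((B δ)⁻¹.mulVec w') := rfl
      rw [h1, norm_smul, Real.norm_eq_abs,
        abs_of_pos (mul_pos hδ0 (add_pos hnb (mul_pos ha hnx)))]
    refine ⟨B δ, bb δ, hδu, ?_, ?_, ?_⟩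
    · rw [hmax]; exact hδ0
    · rw [hmax]
    · rw [hmax, hnum, hlodef]
      field_simp
  -- upper bound for all elements
  have hub : ∀ δ : ℝ, 0 < δ → δ * κ < 1/2 →
      ∀ c ∈ {c : ℝ | ∃ (C : Matrix (Fin n) (Fin n) ℝ) (b' : Fin n → ℝ),
        IsUnit C.det ∧
        0 < max (opNorm r s (C - A) / a) (lpNorm s (b' - b) / nb) ∧
        max (opNorm r s (C - A) / a) (lpNorm s (b' - b) / nb) ≤ δ ∧
        c = (lpNorm r (C⁻¹.mulVec b' - x) / nx) /
            max (opNorm r s (C - A) / a) (lpNorm s (b' - b) / nb)}, c ≤ up δ := by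
    intro δ hδ0 hδκ c hc
    obtain ⟨C, v, hCu, hpos, hle, rfl⟩ := hc
    set ε := max (opNorm r s (C - A) / a) (lpNorm s (v - b) / nb) with hεdef
    have hε : 0 < ε := hpos
    have hεδ : ε ≤ δ := hle
    have h1 : opNorm r s (C - A) ≤ ε * a := by
      have h := le_max_left (opNorm r s (C - A) / a) (lpNorm s (v - b) / nb)
      rw [div_le_iff₀ ha] at h
      exact h
    have h2 : lpNorm s (v - b) ≤ ε * nb := by
      have h := le_max_right (opNorm r s (C - A) / a) (lpNorm s (v - b) / nb)
      rw [div_le_iff₀ hnb] at h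
      exact h
    have hCA : ‖clmOf r s (A - C)‖ ≤ δ * a := by
      rw [clmOf_sub, norm_sub_rev, ← clmOf_sub, ← opNorm_eq]
      exact h1.trans (mul_le_mul_of_nonneg_right hεδ ha.le)
    set nC := ‖clmOf s r C⁻¹‖ with hnCdef
    have hnC : nC ≤ ia / (1 - δ * κ) := by
      have hiden := hCinv C hCu
      have hclm : clmOf s r C⁻¹ = clmOf s r A⁻¹
          + (clmOf s r C⁻¹).comp ((clmOf r s (A - C)).comp (clmOf s r A⁻¹)) := by
        conv_lhs => rw [hiden]
        rw [clmOf_add, clmOf_mul s r s, clmOf_mul r s s]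
      have hb1 : nC ≤ ia + nC * ((δ * a) * ia) := by
        calc nC = ‖clmOf s r A⁻¹
            + (clmOf s r C⁻¹).comp ((clmOf r s (A - C)).comp (clmOf s r A⁻¹))‖ := by
              rw [hnCdef, ← hclm]
        _ ≤ ia + ‖(clmOf s r C⁻¹).comp ((clmOf r s (A - C)).comp (clmOf s r A⁻¹))‖ := by
              rw [hiadef, opNorm_eq]
              exact norm_add_le _ _
        _ ≤ ia + nC * ((δ * a) * ia) := by
              gcongr
              calc ‖(clmOf s r C⁻¹).comp ((clmOf r s (A - C)).comp (clmOf s r A⁻¹))‖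
                  ≤ nC * ‖(clmOf r s (A - C)).comp (clmOf s r A⁻¹)‖ :=
                    ContinuousLinearMap.opNorm_comp_le _ _
              _ ≤ nC * ((δ * a) * ia) := by
                  apply mul_le_mul_of_nonneg_left _ (norm_nonneg _)
                  calc ‖(clmOf r s (A - C)).comp (clmOf s r A⁻¹)‖
                      ≤ ‖clmOf r s (A - C)‖ * ‖clmOf s r A⁻¹‖ :=
                        ContinuousLinearMap.opNorm_comp_le _ _
                  _ ≤ (δ * a) * ia := by
                      rw [hiadef, opNorm_eq]
                      exact mul_le_mul_of_nonneg_right hCA (norm_nonneg _)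
      have hκ' : (δ * a) * ia = δ * κ := by rw [hκdef]; ring
      rw [hκ'] at hb1
      have hden : 0 < 1 - δ * κ := by linarith
      rw [le_div_iff₀ hden]
      have hnC0 : 0 ≤ nC := norm_nonneg _
      nlinarith [hb1]
    have hCx : v - C.mulVec x = (v - b) - (C - A).mulVec x := by
      rw [Matrix.sub_mulVec, hAx]
      abel
    have hCv : C⁻¹.mulVec v - x = C⁻¹.mulVec ((v - b) - (C - A).mulVec x) := by
      rw [← hCx, Matrix.mulVec_sub, Matrix.mulVec_mulVec,
        Matrix.nonsing_inv_mul _ hCu, Matrix.one_mulVec]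
    have hCAx : lpNorm s ((C - A).mulVec x) ≤ (ε * a) * nx := by
      calc lpNorm s ((C - A).mulVec x)
          = ‖clmOf r s (C - A) (WithLp.toLp r x)‖ := rfl
      _ ≤ ‖clmOf r s (C - A)‖ * nx := (clmOf r s (C - A)).le_opNorm _
      _ ≤ (ε * a) * nx := by
          apply mul_le_mul_of_nonneg_right _ hnx.le
          rw [← opNorm_eq]
          exact h1
    have hN : lpNorm r (C⁻¹.mulVec v - x) ≤ nC * (ε * nb + (ε * a) * nx) := by
      rw [hCv]
      calc lpNorm r (C⁻¹.mulVec ((v - b) - (C - A).mulVec x))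
          = ‖clmOf s r C⁻¹ (WithLp.toLp s ((v - b) - (C - A).mulVec x))‖ := rfl
      _ ≤ nC * ‖(WithLp.toLp s ((v - b) - (C - A).mulVec x))‖ :=
          (clmOf s r C⁻¹).le_opNorm _
      _ ≤ nC * (ε * nb + (ε * a) * nx) := by
          apply mul_le_mul_of_nonneg_left _ (norm_nonneg _)
          calc ‖(WithLp.toLp s ((v - b) - (C - A).mulVec x))‖
              ≤ lpNorm s (v - b) + lpNorm s ((C - A).mulVec x) := by
                rw [WithLp.toLp_sub]; exact norm_sub_le _ _
          _ ≤ ε * nb + (ε * a) * nx := add_le_add h2 hCAx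
    have hnC0 : 0 ≤ nC := norm_nonneg _
    calc (lpNorm r (C⁻¹.mulVec v - x) / nx) / ε
        ≤ ((nC * (ε * nb + (ε * a) * nx)) / nx) / ε := by gcongr
    _ = nC * ((nb + a * nx) / nx) := by
        field_simp
    _ ≤ (ia / (1 - δ * κ)) * ((nb + a * nx) / nx) := by
        apply mul_le_mul_of_nonneg_right hnC
        positivity
    _ = up δ := rfl
  -- squeeze
  refine tendsto_of_tendsto_of_tendsto_of_le_of_le' hlo_tendsto hup_tendsto ?_ ?_
  · filter_upwards [hev] with δ hδ
    obtain ⟨hδ0, hδκ, hδu⟩ := hδ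
    exact le_csSup ⟨up δ, hub δ hδ0 hδκ⟩ (hmem δ hδ0 hδu)
  · filter_upwards [hev] with δ hδ
    obtain ⟨hδ0, hδκ, hδu⟩ := hδ
    exact csSup_le ⟨lo δ, hmem δ hδ0 hδu⟩ (hub δ hδ0 hδκ)
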